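/- Let σ > 0 and α, r ∈ ℝ satisfy (σ²/2 − α)² + 2σ²r ≤ 0 (i.e. the characteristic polynomial P(d) = (σ²/2)d² + (α − σ²/2)d − r has a double real root or two complex conjugate roots). Let g : (0,∞) → [0,∞] be Borel measurable with ∫₀^∞ g(y) dy > 0 (possibly infinite). Then for every x > 0 the iterated integral ∫₀^∞ e^{−rt} ( ∫_ℝ g( x·exp((α − σ²/2)t + σw) ) · e^{−w²/(2t)}/√(2πt) dw ) dt equals +∞. -/

import Mathlib

open MeasureTheory Set

/-- 1D lintegral change of variables. -/
lemma my_lintegral_image {s : Set ℝ} {f f' : ℝ → ℝ} (hs : MeasurableSet s)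
    (hf' : ∀ x ∈ s, HasDerivWithinAt f (f' x) s x) (hf : InjOn f s) (g : ℝ → ENNReal) :
    ∫⁻ x in f '' s, g x = ∫⁻ x in s, ENNReal.ofReal |f' x| * g (f x) := by
  simpa only [ContinuousLinearMap.det_toSpanSingleton] using
    lintegral_image_eq_lintegral_abs_det_fderiv_mul volume hs
      (fun x hx => (hf' x hx).hasFDerivWithinAt) hf g

/-- affine substitution for lintegral over ℝ. -/
lemma my_lintegral_affine (c σ : ℝ) (hσ : 0 < σ) (g : ℝ → ENNReal) :
    ∫⁻ x, g x = ∫⁻ w, ENNReal.ofReal σ * g (c + σ * w) := by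
  have himg : (fun w : ℝ => c + σ * w) '' univ = univ := by
    apply image_univ_of_surjective
    intro y
    exact ⟨(y - c) / σ, by field_simp; ring⟩
  have hd : ∀ w ∈ (univ : Set ℝ), HasDerivWithinAt (fun w : ℝ => c + σ * w) σ univ w := by
    intro w _
    exact (((hasDerivAt_id w).const_mul σ).const_add c).hasDerivWithinAt.congr_deriv (mul_one σ)
  have hinj : InjOn (fun w : ℝ => c + σ * w) univ := by
    intro a _ b _ h
    simp only at h
    nlinarith [h]
  have := my_lintegral_image (s := univ) MeasurableSet.univ hd hinj g
  rw [himg] at this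
  simpa [Measure.restrict_univ, abs_of_pos hσ] using this


/-- ∫_T^∞ C/√t dt = ∞ for C > 0, T > 0. -/
lemma my_div_sqrt_top (C T : ℝ) (hC : 0 < C) (hT : 0 < T) :
    ∫⁻ t in Ioi T, ENNReal.ofReal (C / Real.sqrt t) = ⊤ := by
  by_contra h
  have hlt : (∫⁻ t in Ioi T, ENNReal.ofReal (C / Real.sqrt t)) < ⊤ := lt_top_iff_ne_top.2 h
  have hmeas : Measurable fun t : ℝ => C / Real.sqrt t :=
    (measurable_const.div Real.continuous_sqrt.measurable)
  have hint : IntegrableOn (fun t : ℝ => C / Real.sqrt t) (Ioi T) := by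
    refine ⟨hmeas.aestronglyMeasurable.restrict, ?_⟩
    rw [hasFiniteIntegral_iff_ofReal]
    · exact hlt
    · filter_upwards with t
      positivity
  have hint2 : IntegrableOn (fun t : ℝ => t ^ (-(1:ℝ)/2)) (Ioi T) := by
    have : EqOn (fun t : ℝ => C⁻¹ * (C / Real.sqrt t)) (fun t : ℝ => t ^ (-(1:ℝ)/2)) (Ioi T) := by
      intro t ht
      simp only
      have htpos := hT.trans ht
      rw [inv_mul_eq_div, div_div, mul_comm, ← div_div, div_self hC.ne',
        Real.sqrt_eq_rpow, one_div, ← Real.rpow_neg_one, ← Real.rpow_mul htpos.le]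
      norm_num
    exact (IntegrableOn.congr_fun (hint.const_mul C⁻¹) this measurableSet_Ioi)
  rw [integrableOn_Ioi_rpow_iff hT] at hint2
  norm_num at hint2

lemma my_K_top (σ b : ℝ) (hσ : 0 < σ) :
    ∫⁻ t in Ioi (0:ℝ),
      ENNReal.ofReal (Real.exp (-(b^2)/(2*σ^2*t)) / Real.sqrt (2*Real.pi*t)) = ⊤ := by
  set T : ℝ := max 1 (b^2) with hT
  have hT1 : (1:ℝ) ≤ T := le_max_left _ _
  have hTpos : (0:ℝ) < T := lt_of_lt_of_le one_pos hT1
  set C : ℝ := Real.exp (-1/(2*σ^2)) / Real.sqrt (2*Real.pi) with hC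
  have hCpos : 0 < C := by positivity
  rw [eq_top_iff, ← my_div_sqrt_top C T hCpos hTpos]
  calc ∫⁻ t in Ioi T, ENNReal.ofReal (C / Real.sqrt t)
      ≤ ∫⁻ t in Ioi T,
          ENNReal.ofReal (Real.exp (-(b^2)/(2*σ^2*t)) / Real.sqrt (2*Real.pi*t)) := by
        apply setLIntegral_mono' measurableSet_Ioi
        intro t ht
        apply ENNReal.ofReal_le_ofReal
        have htpos : (0:ℝ) < t := hTpos.trans ht
        rw [hC, div_div, ← Real.sqrt_mul (by positivity)]
        apply div_le_div_of_nonneg_right ?_ (by positivity)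
        apply Real.exp_le_exp.2
        rw [neg_div, neg_div, neg_le_neg_iff,
          div_le_div_iff₀ (by positivity) (by positivity)]
        have hb2 : b^2 ≤ t := le_trans (le_max_right 1 (b^2)) ht.le
        nlinarith [mul_le_mul_of_nonneg_right hb2 (by positivity : (0:ℝ) ≤ 2*σ^2)]
    _ ≤ _ := lintegral_mono_set (Ioi_subset_Ioi hTpos.le)

lemma my_pos_set (g : ℝ → ENNReal) (hg : Measurable g)
    (hgpos : 0 < ∫⁻ y in Set.Ioi (0 : ℝ), g y) (x : ℝ) (hx : 0 < x) :
    volume {b : ℝ | g (x * Real.exp b) ≠ 0} ≠ 0 := by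
  intro hs
  have him : (fun b : ℝ => x * Real.exp b) '' univ = Ioi 0 := by
    ext y
    simp only [image_univ, mem_range, mem_Ioi]
    constructor
    · rintro ⟨b, rfl⟩; positivity
    · intro hy
      exact ⟨Real.log (y / x), by rw [Real.exp_log (by positivity)]; field_simp⟩
  have hd : ∀ w ∈ (univ : Set ℝ), HasDerivWithinAt (fun b : ℝ => x * Real.exp b)
      (x * Real.exp w) univ w :=
    fun w _ => ((Real.hasDerivAt_exp w).const_mul x).hasDerivWithinAt
  have hinj : InjOn (fun b : ℝ => x * Real.exp b) univ := by
    intro a _ c _ h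
    simp only at h
    exact Real.exp_injective (mul_left_cancel₀ hx.ne' h)
  have heq := my_lintegral_image (s := univ) MeasurableSet.univ hd hinj g
  rw [him, Measure.restrict_univ] at heq
  have hae : ∀ᵐ b : ℝ, g (x * Real.exp b) = 0 := by
    rw [ae_iff]; exact hs
  rw [heq, lintegral_congr_ae (hae.mono fun b hb => by rw [hb, mul_zero]),
    lintegral_zero] at hgpos
  exact lt_irrefl _ hgpos


lemma my_rearrange (G : ENNReal) (a b c d : ℝ) (ha : 0 ≤ a) (hc : 0 ≤ c)
    (h : a * b ≤ c * d) :
    G * ENNReal.ofReal a * ENNReal.ofReal b ≤ ENNReal.ofReal c * (G * ENNReal.ofReal d) := by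
  rw [mul_assoc]
  calc G * (ENNReal.ofReal a * ENNReal.ofReal b) = G * ENNReal.ofReal (a * b) := by
        rw [ENNReal.ofReal_mul ha]
    _ ≤ G * ENNReal.ofReal (c * d) := mul_le_mul' le_rfl (ENNReal.ofReal_le_ofReal h)
    _ = G * (ENNReal.ofReal c * ENNReal.ofReal d) := by rw [ENNReal.ofReal_mul hc]
    _ = ENNReal.ofReal c * (G * ENNReal.ofReal d) := by ring

/-- If the characteristic polynomial `P(d) = (σ²/2)d² + (α − σ²/2)d − r` has a double real
root or complex conjugate roots (i.e. `(σ²/2 − α)² + 2σ²r ≤ 0`), then for every nonnegative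
Borel function `g` with positive integral on `(0,∞)`, the expected discounted payoff
`E_x[∫₀^∞ e^{−rt} g(X(t)) dt]`, written as an iterated integral, is infinite. -/
theorem stmt_0 (σ α r : ℝ) (hσ : 0 < σ)
    (hΔ : (σ ^ 2 / 2 - α) ^ 2 + 2 * σ ^ 2 * r ≤ 0)
    (g : ℝ → ENNReal) (hg : Measurable g)
    (hgpos : 0 < ∫⁻ y in Set.Ioi (0 : ℝ), g y)
    (x : ℝ) (hx : 0 < x) :
    (∫⁻ t in Set.Ioi (0 : ℝ),
        ENNReal.ofReal (Real.exp (-r * t)) *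
          ∫⁻ w : ℝ,
            g (x * Real.exp ((α - σ ^ 2 / 2) * t + σ * w)) *
              ENNReal.ofReal (Real.exp (-w ^ 2 / (2 * t)) / Real.sqrt (2 * Real.pi * t)))
      = ⊤ := by
  set m : ℝ := α - σ ^ 2 / 2 with hm_def
  have hσ2 : (0:ℝ) < σ ^ 2 := by positivity
  have hm : m ^ 2 + 2 * σ ^ 2 * r ≤ 0 := by
    have e : (σ ^ 2 / 2 - α) ^ 2 = m ^ 2 := by rw [hm_def]; ring
    linarith [e ▸ hΔ]
  set H : ℝ → ENNReal := fun b =>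
    g (x * Real.exp b) * ENNReal.ofReal (Real.exp (m * b / σ ^ 2)) with hH
  set K : ℝ → ℝ → ENNReal := fun t b =>
    ENNReal.ofReal (Real.exp (-(b ^ 2) / (2 * σ ^ 2 * t)) / Real.sqrt (2 * Real.pi * t)) with hK
  -- measurability facts
  have hHmeas : Measurable H := by
    apply Measurable.mul
    · exact hg.comp (Real.measurable_exp.const_mul x)
    · exact ENNReal.measurable_ofReal.comp
        (Real.measurable_exp.comp ((measurable_id.const_mul m).div_const _))
  have hKmeas : Measurable fun p : ℝ × ℝ => K p.1 p.2 := by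
    apply ENNReal.measurable_ofReal.comp
    apply Measurable.div
    · exact Real.measurable_exp.comp
        (((measurable_snd.pow_const 2).neg).div (measurable_fst.const_mul _))
    · exact Real.continuous_sqrt.measurable.comp (measurable_fst.const_mul _)
  -- Step A: pointwise lower bound for each t > 0
  have key : ∀ t ∈ Ioi (0:ℝ),
      (ENNReal.ofReal σ)⁻¹ * ∫⁻ b, H b * K t b ≤
        ENNReal.ofReal (Real.exp (-r * t)) *
          ∫⁻ w : ℝ, g (x * Real.exp (m * t + σ * w)) *
            ENNReal.ofReal (Real.exp (-w ^ 2 / (2 * t)) / Real.sqrt (2 * Real.pi * t)) := by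
    intro t ht
    simp only [mem_Ioi] at ht
    rw [my_lintegral_affine (m * t) σ hσ (fun b => H b * K t b),
      lintegral_const_mul' (ENNReal.ofReal σ) _ ENNReal.ofReal_ne_top, ← mul_assoc,
      ENNReal.inv_mul_cancel (by simpa using hσ) ENNReal.ofReal_ne_top, one_mul,
      ← lintegral_const_mul' (ENNReal.ofReal (Real.exp (-r * t))) _ ENNReal.ofReal_ne_top]
    apply lintegral_mono
    intro w
    show g (x * Real.exp (m * t + σ * w)) * ENNReal.ofReal (Real.exp (m * (m * t + σ * w) / σ ^ 2))
        * ENNReal.ofReal (Real.exp (-((m * t + σ * w) ^ 2) / (2 * σ ^ 2 * t)) /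
            Real.sqrt (2 * Real.pi * t))
      ≤ ENNReal.ofReal (Real.exp (-r * t)) * (g (x * Real.exp (m * t + σ * w)) *
          ENNReal.ofReal (Real.exp (-w ^ 2 / (2 * t)) / Real.sqrt (2 * Real.pi * t)))
    apply my_rearrange _ _ _ _ _ (Real.exp_nonneg _) (Real.exp_nonneg _)
    rw [mul_div_assoc', mul_div_assoc']
    apply div_le_div_of_nonneg_right ?_ (by positivity)
    rw [← Real.exp_add, ← Real.exp_add]
    apply Real.exp_le_exp.2
    have e1 : m * (m * t + σ * w) / σ ^ 2 + -((m * t + σ * w) ^ 2) / (2 * σ ^ 2 * t)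
        = -w ^ 2 / (2 * t) + m ^ 2 * t / (2 * σ ^ 2) := by
      field_simp
      ring
    have hr : m ^ 2 * t / (2 * σ ^ 2) ≤ -r * t := by
      rw [div_le_iff₀ (by positivity)]
      nlinarith [mul_le_mul_of_nonneg_right
        (show m ^ 2 ≤ -(2 * σ ^ 2 * r) by linarith) ht.le]
    linarith [e1.le, e1.ge]
  -- Step B: reduce to the swapped integral
  have hA : (∫⁻ t in Ioi (0:ℝ), ∫⁻ b, H b * K t b) = ⊤ := by
    have hswap : (∫⁻ t in Ioi (0:ℝ), ∫⁻ b, H b * K t b)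
        = ∫⁻ b, ∫⁻ t in Ioi (0:ℝ), H b * K t b := by
      apply lintegral_lintegral_swap
      exact ((hHmeas.comp measurable_snd).mul hKmeas).aemeasurable
    rw [hswap]
    have hinner : ∀ b : ℝ, (∫⁻ t in Ioi (0:ℝ), H b * K t b) = H b * ⊤ := by
      intro b
      have hKb : Measurable fun t : ℝ => K t b := by
        have := hKmeas.comp ((measurable_id.prodMk measurable_const) :
          Measurable fun t : ℝ => (t, b))
        exact this
      rw [lintegral_const_mul (H b) hKb, my_K_top σ b hσ]
    simp only [hinner]
    set s : Set ℝ := {b : ℝ | g (x * Real.exp b) ≠ 0} with hs_def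
    have hsm : MeasurableSet s :=
      (hg.comp (Real.measurable_exp.const_mul x)) (measurableSet_singleton 0) |>.compl
    have hs0 : volume s ≠ 0 := my_pos_set g hg hgpos x hx
    rw [eq_top_iff]
    calc (⊤ : ENNReal) = ⊤ * volume s := (ENNReal.top_mul hs0).symm
      _ = ∫⁻ _ in s, ⊤ := (setLIntegral_const s ⊤).symm
      _ ≤ ∫⁻ b in s, H b * ⊤ := by
          apply setLIntegral_mono' hsm
          intro b hb
          rw [ENNReal.mul_top (mul_ne_zero hb (by simp [Real.exp_pos]))]
      _ ≤ ∫⁻ b, H b * ⊤ := setLIntegral_le_lintegral s _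
  -- conclude
  rw [eq_top_iff]
  calc (⊤ : ENNReal) = (ENNReal.ofReal σ)⁻¹ * ∫⁻ t in Ioi (0:ℝ), ∫⁻ b, H b * K t b := by
        rw [hA, ENNReal.mul_top (by simp [ENNReal.inv_ne_zero])]
    _ = ∫⁻ t in Ioi (0:ℝ), (ENNReal.ofReal σ)⁻¹ * ∫⁻ b, H b * K t b := by
        rw [lintegral_const_mul' _ _ (by simp [ENNReal.inv_ne_top, hσ])]
    _ ≤ _ := setLIntegral_mono' measurableSet_Ioi key
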